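/- If w is a binary word with 00w ∈ 𝓛 and 00w is α-power-free (α > 2, r = ⌈α⌉), then μ^s(0^{r−1} w) is α-power-free for every positive integer s. -/

import Mathlib

set_option maxHeartbeats 1000000

/-- Thue–Morse morphism: 0 ↦ 01, 1 ↦ 10 (false = 0, true = 1). -/
def mu : List Bool → List Bool :=
  fun w => w.flatMap (fun b => if b then [true, false] else [false, true])

/-- `w` has period `p`: `w[i] = w[i+p]` whenever both defined. -/
def HasPeriod (w : List Bool) (p : ℕ) : Prop :=
  ∀ i, i + p < w.length → w[i]? = w[i + p]?

/-- `w` is α-power-free: no factor `u` has a period `p` with `|u|/p ≥ α`. -/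
def PowerFree (α : ℝ) (w : List Bool) : Prop :=
  ∀ u p, u <:+: w → 0 < p → HasPeriod u p → (u.length : ℝ) / p < α

/-- `𝓛`: factors of images of `mu`. -/
def InL (w : List Bool) : Prop := ∃ x, w <:+: mu x

lemma mu_cons (b : Bool) (x : List Bool) : mu (b :: x) = b :: (!b) :: mu x := by
  cases b <;> rfl

lemma mu_length (x : List Bool) : (mu x).length = 2 * x.length := by
  induction x with
  | nil => rfl
  | cons b x ih => rw [mu_cons]; simp only [List.length_cons, ih]; omega

lemma mu_get_even (x : List Bool) (k : ℕ) : (mu x)[2 * k]? = x[k]? := by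
  induction x generalizing k with
  | nil => rfl
  | cons b x ih =>
    rw [mu_cons]
    cases k with
    | zero => rfl
    | succ k =>
      rw [show 2 * (k + 1) = 2 * k + 1 + 1 from by ring]
      simp only [List.getElem?_cons_succ]
      exact ih k

lemma mu_get_odd (x : List Bool) (k : ℕ) :
    (mu x)[2 * k + 1]? = (x[k]?).map not := by
  induction x generalizing k with
  | nil => rfl
  | cons b x ih =>
    rw [mu_cons]
    cases k with
    | zero => rfl
    | succ k =>
      rw [show 2 * (k + 1) + 1 = (2 * k + 1) + 1 + 1 from by ring]
      simp only [List.getElem?_cons_succ]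
      exact ih k

lemma get?_some_of_lt (l : List Bool) (n : ℕ) (h : n < l.length) :
    ∃ c, l[n]? = some c := ⟨l[n], List.getElem?_eq_getElem h⟩

lemma mu_pair (x : List Bool) (k : ℕ) (h : 2 * k + 1 < (mu x).length) :
    ∃ c, (mu x)[2 * k]? = some c ∧ (mu x)[2 * k + 1]? = some (!c) := by
  have hk : k < x.length := by have := mu_length x; omega
  obtain ⟨c, hc⟩ := get?_some_of_lt x k hk
  exact ⟨c, by rw [mu_get_even, hc], by rw [mu_get_odd, hc]; rfl⟩

lemma get?_of_infix {u v : List Bool} (h : u <:+: v) :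
    ∃ t, t + u.length ≤ v.length ∧ ∀ i, i < u.length → u[i]? = v[t + i]? := by
  obtain ⟨s, t, rfl⟩ := h
  refine ⟨s.length, by simp, fun i hi => ?_⟩
  rw [List.append_assoc, List.getElem?_append_right (Nat.le_add_right _ _),
    Nat.add_sub_cancel_left, List.getElem?_append_left hi]

lemma window_infix (v : List Bool) (t ℓ : ℕ) (h : t + ℓ ≤ v.length) :
    ∃ u, u <:+: v ∧ u.length = ℓ ∧ ∀ i, i < ℓ → u[i]? = v[t + i]? := by
  refine ⟨(v.drop t).take ℓ,
    ((List.take_prefix _ _).isInfix).trans (List.drop_suffix t v).isInfix, ?_, fun i hi => ?_⟩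
  · simp only [List.length_take, List.length_drop]; omega
  · rw [List.getElem?_take_of_lt hi, List.getElem?_drop]

lemma powerFree_iff (α : ℝ) (v : List Bool) : PowerFree α v ↔
    ∀ t p ℓ, 0 < p → t + ℓ ≤ v.length →
      (∀ i, i + p < ℓ → v[t + i]? = v[t + i + p]?) → (ℓ : ℝ) / p < α := by
  constructor
  · intro H t p ℓ hp hle hper
    obtain ⟨u, hinf, hlen, hget⟩ := window_infix v t ℓ hle
    have := H u p hinf hp (fun i hip => by
      rw [hlen] at hip
      rw [hget i (by omega), hget (i + p) (by omega), ← Nat.add_assoc]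
      exact hper i hip)
    rwa [hlen] at this
  · intro H u p hinf hp hper
    obtain ⟨t, hle, hget⟩ := get?_of_infix hinf
    exact H t p u.length hp hle (fun i hip => by
      rw [← hget i (by omega), show t + i + p = t + (i + p) from by ring,
        ← hget (i + p) hip]
      exact hper i hip)

lemma mu_no_three (x : List Bool) (n : ℕ) (b : Bool)
    (h0 : (mu x)[n]? = some b) (h1 : (mu x)[n + 1]? = some b)
    (h2 : (mu x)[n + 2]? = some b) : False := by
  have hlen : n + 2 < (mu x).length := (List.getElem?_eq_some_iff.mp h2).1
  rcases Nat.even_or_odd n with ⟨k, hk⟩ | ⟨k, hk⟩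
  · obtain ⟨c, hc0, hc1⟩ := mu_pair x k (by omega)
    rw [show n = 2 * k from by omega, hc0] at h0
    rw [show n + 1 = 2 * k + 1 from by omega, hc1] at h1
    cases b <;> simp_all
  · obtain ⟨c, hc0, hc1⟩ := mu_pair x (k + 1) (by omega)
    rw [show n + 1 = 2 * (k + 1) from by omega, hc0] at h1
    rw [show n + 2 = 2 * (k + 1) + 1 from by omega, hc1] at h2
    cases b <;> simp_all

lemma InL_no_three {z : List Bool} (hz : InL z) (n : ℕ) (b : Bool)
    (h0 : z[n]? = some b) (h1 : z[n + 1]? = some b)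
    (h2 : z[n + 2]? = some b) : False := by
  obtain ⟨x, hx⟩ := hz
  obtain ⟨t, _, hget⟩ := get?_of_infix hx
  have hn : n + 2 < z.length := (List.getElem?_eq_some_iff.mp h2).1
  refine mu_no_three x (t + n) b (by rw [← hget n (by omega)]; exact h0) ?_ ?_
  · rw [show t + n + 1 = t + (n + 1) from by ring, ← hget (n + 1) (by omega)]; exact h1
  · rw [show t + n + 2 = t + (n + 2) from by ring, ← hget (n + 2) (by omega)]; exact h2

lemma mu_preserve {α : ℝ} (hα : 2 < α) {x : List Bool} (hx : PowerFree α x) :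
    PowerFree α (mu x) := by
  rw [powerFree_iff] at hx ⊢
  intro t p ℓ hp hle hper
  by_contra hcon
  push_neg at hcon
  have hp' : (0 : ℝ) < p := by exact_mod_cast hp
  have hp1 : (1 : ℝ) ≤ p := by exact_mod_cast hp
  have hαp : α * p ≤ ℓ := (le_div_iff₀ hp').mp hcon
  have h2p : 2 * p < ℓ := by
    have h : (2 : ℝ) * p < ℓ := lt_of_lt_of_le (by nlinarith) hαp
    exact_mod_cast h
  have hml : (mu x).length = 2 * x.length := mu_length x
  rw [mu_length x] at hle
  rcases Nat.even_or_odd p with ⟨q, hq⟩ | ⟨q, hq⟩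
  · -- even period p = 2q
    have hq0 : 0 < q := by omega
    set k0 := t / 2 with hk0
    set k1 := (t + ℓ - 1) / 2 with hk1
    have key : ∀ k, k0 ≤ k → k + q ≤ k1 → x[k]? = x[k + q]? := by
      intro k hk hk'
      by_cases hkt : t ≤ 2 * k
      · have hP := hper (2 * k - t) (by omega)
        rw [show t + (2 * k - t) + p = 2 * (k + q) from by omega,
          show t + (2 * k - t) = 2 * k from by omega,
          mu_get_even, mu_get_even] at hP
        exact hP
      · have ht : t = 2 * k + 1 := by omega
        have hP := hper 0 (by omega)
        rw [show t + 0 + p = 2 * (k + q) + 1 from by omega,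
          show t + 0 = 2 * k + 1 from by omega,
          mu_get_odd, mu_get_odd] at hP
        cases hxk : x[k]? <;> cases hxq : x[k + q]? <;>
          rw [hxk, hxq] at hP <;> simp_all
    have hres := hx k0 q (k1 + 1 - k0) hq0 (by omega)
      (fun i hiq => key (k0 + i) (by omega) (by omega))
    have hll : ℓ ≤ 2 * (k1 + 1 - k0) := by omega
    have hll' : (ℓ : ℝ) ≤ 2 * ((k1 + 1 - k0 : ℕ) : ℝ) := by exact_mod_cast hll
    rw [div_lt_iff₀ (by exact_mod_cast hq0 : (0 : ℝ) < q)] at hres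
    have hpq : (p : ℝ) = 2 * q := by
      have : p = 2 * q := by omega
      exact_mod_cast this
    nlinarith
  · -- odd period p = 2q + 1
    by_cases hA : ∃ i, i + p + 1 < ℓ ∧ (mu x)[t + i]? = (mu x)[t + i + 1]?
    · obtain ⟨i, hi, heq⟩ := hA
      have e1 := hper i (by omega)
      have e2 := hper (i + 1) (by omega)
      rw [show t + (i + 1) + p = t + i + p + 1 from by omega,
        show t + (i + 1) = t + i + 1 from by omega] at e2
      rcases Nat.even_or_odd (t + i) with ⟨k, hk⟩ | ⟨k, hk⟩
      · obtain ⟨c, hc0, hc1⟩ := mu_pair x k (by omega)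
        rw [show t + i + 1 = 2 * k + 1 from by omega,
          show t + i = 2 * k from by omega, hc0, hc1] at heq
        simp at heq
      · have heq' : (mu x)[t + i + p]? = (mu x)[t + i + p + 1]? :=
          e1.symm.trans (heq.trans e2)
        obtain ⟨c, hc0, hc1⟩ := mu_pair x (k + q + 1) (by omega)
        rw [show t + i + p + 1 = 2 * (k + q + 1) + 1 from by omega,
          show t + i + p = 2 * (k + q + 1) from by omega, hc0, hc1] at heq'
        simp at heq'
    · push_neg at hA
      obtain ⟨c0, hc0⟩ := get?_some_of_lt (mu x) t (by omega)
      have alt : ∀ j, j ≤ p →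
          (mu x)[t + j]? = some (if j % 2 = 0 then c0 else !c0) := by
        intro j
        induction j with
        | zero => intro _; simpa using hc0
        | succ j ih =>
          intro hj
          have hprev := ih (by omega)
          have hne := hA j (by omega)
          obtain ⟨c', hc'⟩ := get?_some_of_lt (mu x) (t + j + 1) (by omega)
          have hc'' : (mu x)[t + (j + 1)]? = some c' := by
            rw [show t + (j + 1) = t + j + 1 from by ring]; exact hc'
          rw [hc'']
          have hne' : c' ≠ (if j % 2 = 0 then c0 else !c0) := by
            intro h
            exact hne (by rw [hprev, hc', h])
          by_cases hj2 : j % 2 = 0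
          · rw [if_neg (by omega : ¬ (j + 1) % 2 = 0)]
            rw [if_pos hj2] at hne'
            cases c' <;> cases c0 <;> simp_all
          · rw [if_pos (by omega : (j + 1) % 2 = 0)]
            rw [if_neg hj2] at hne'
            cases c' <;> cases c0 <;> simp_all
      have h1 := alt p le_rfl
      have h2 := hper 0 (by omega)
      simp only [Nat.add_zero] at h2
      rw [hc0, h1, if_neg (by omega : ¬ p % 2 = 0)] at h2
      cases c0 <;> simp_all

lemma base_free {α : ℝ} (hα : 2 < α) {w : List Bool}
    (hL : InL ([false, false] ++ w)) (hfree : PowerFree α ([false, false] ++ w)) :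
    PowerFree α (List.replicate (⌈α⌉₊ - 1) false ++ w) := by
  classical
  set m := ⌈α⌉₊ - 1 with hm
  have hr3 : 3 ≤ ⌈α⌉₊ := by
    have h2 : 2 < ⌈α⌉₊ := Nat.lt_ceil.mpr (by exact_mod_cast hα)
    omega
  have hm2 : 2 ≤ m := by omega
  have hceil : (⌈α⌉₊ : ℝ) < α + 1 := Nat.ceil_lt_add_one (by linarith)
  set v := List.replicate m false ++ w with hv
  have hvlen : v.length = m + w.length := by simp [hv]
  have hv_lt : ∀ n, n < m → v[n]? = some false := by
    intro n hn
    rw [hv, List.getElem?_append_left (by simpa using hn),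
      List.getElem?_eq_getElem (by simpa using hn)]
    simp
  have hv_ge : ∀ c, v[m + c]? = w[c]? := by
    intro c
    rw [hv, List.getElem?_append_right (by simp)]
    simp
  have hw3 : ∀ d b, ¬ (w[d]? = some b ∧ w[d + 1]? = some b ∧
      w[d + 2]? = some b) := by
    rintro d b ⟨e0, e1, e2⟩
    have hmapw : ∀ e, ([false, false] ++ w)[2 + d + e]? = w[d + e]? := by
      intro e
      rw [List.getElem?_append_right (l₁ := [false, false]) (by simp; omega)]
      congr 1
      simp
      omega
    refine InL_no_three hL (2 + d) b ?_ ?_ ?_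
    · have := hmapw 0; simp only [Nat.add_zero] at this; rw [this]; exact e0
    · rw [hmapw 1]; exact e1
    · rw [hmapw 2]; exact e2
  have hw0 : w ≠ [] → w[0]? = some true := by
    intro hne
    have hwl : 0 < w.length := List.length_pos_iff.mpr hne
    obtain ⟨b, hb⟩ := get?_some_of_lt w 0 hwl
    cases b
    · exfalso
      refine InL_no_three hL 0 false rfl rfl ?_
      show (false :: false :: w)[2]? = some false
      exact hb
    · exact hb
  rw [powerFree_iff]
  intro t p ℓ hp hle hper
  by_contra hcon
  push_neg at hcon
  have hp' : (0 : ℝ) < p := by exact_mod_cast hp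
  have hp1 : (1 : ℝ) ≤ p := by exact_mod_cast hp
  have hαp : α * p ≤ ℓ := (le_div_iff₀ hp').mp hcon
  have h2p : 2 * p < ℓ := by
    have h : (2 : ℝ) * p < ℓ := lt_of_lt_of_le (by nlinarith) hαp
    exact_mod_cast h
  have hℓr : m + 1 ≤ ℓ := by
    have h1 : α ≤ (ℓ : ℝ) := le_trans (by nlinarith) hαp
    have h2 : (⌈α⌉₊ : ℝ) < (ℓ : ℝ) + 1 := by linarith
    have h3 : ⌈α⌉₊ < ℓ + 1 := by exact_mod_cast h2
    omega
  rw [hvlen] at hle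
  by_cases hcase : m ≤ t + 2
  · -- within 00w
    have hmap : ∀ c, ([false, false] ++ w)[c]? = v[m - 2 + c]? := by
      intro c
      by_cases hc : c < 2
      · rw [hv_lt (m - 2 + c) (by omega)]
        interval_cases c <;> rfl
      · rw [show m - 2 + c = m + (c - 2) from by omega, hv_ge,
          List.getElem?_append_right (l₁ := [false, false]) (by simp; omega)]
        norm_num
    have hres := (powerFree_iff α _).mp hfree (t - (m - 2)) p ℓ hp
      (by simp only [List.length_append, List.length_cons, List.length_nil]; omega)
      (fun i hip => by
        rw [hmap, hmap, show m - 2 + (t - (m - 2) + i) = t + i from by omega,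
          show m - 2 + (t - (m - 2) + i + p) = t + i + p from by omega]
        exact hper i hip)
    exact absurd hres (not_lt.mpr hcon)
  · -- t + 3 ≤ m
    have hwne : w ≠ [] := by
      intro h
      rw [h] at hle
      simp at hle
      omega
    have hw0' := hw0 hwne
    have hvm : v[m]? = some true := by
      have := hv_ge 0
      simp only [Nat.add_zero] at this
      rw [this]; exact hw0'
    by_cases hpj : p ≤ m - t
    · have hP := hper (m - t - p) (by omega)
      rw [show t + (m - t - p) + p = m from by omega, hvm,
        hv_lt (t + (m - t - p)) (by omega)] at hP
      simp at hP
    · have hd : ∀ c, c < 3 → w[t + p - m + c]? = some false := by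
        intro c hc
        have hP := hper c (by omega)
        rw [hv_lt (t + c) (by omega),
          show t + c + p = m + (t + p - m + c) from by omega, hv_ge] at hP
        exact hP.symm
      exact hw3 (t + p - m) false ⟨hd 0 (by omega), hd 1 (by omega), hd 2 (by omega)⟩

theorem mu_iter_powerFree (α : ℝ) (hα : 2 < α) (r : ℕ) (hr : r = ⌈α⌉₊)
    (w : List Bool) (hL : InL ([false, false] ++ w))
    (hfree : PowerFree α ([false, false] ++ w)) (s : ℕ) (hs : 0 < s) :
    PowerFree α (mu^[s] (List.replicate (r - 1) false ++ w)) := by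
  subst hr
  have base := base_free hα hL hfree
  clear hs
  induction s with
  | zero => simpa using base
  | succ n ih =>
    rw [Function.iterate_succ_apply']
    exact mu_preserve hα ih
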